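/- arXiv:2312.00946 — 3 statements merged into one kernel-verified Lean document; each statement's English description precedes it below -/
import Mathlib

section
/- Let X be a finite set, P a probability distribution on X, v : X → ℝ, and c ∈ [0,1]. Define the mean–upper-semideviation mapping σ(P, v) = Σ_j P_j v(j) + c Σ_j P_j max(0, v(j) − Σ_k P_k v(k)). Then σ is monotone with respect to v: if v ≤ w pointwise, then σ(P, v) ≤ σ(P, w). -/
theorem stmt_5 {X : Type*} [Fintype X] (P : X → ℝ)
    (hP0 : ∀ j, 0 ≤ P j) (hP1 : ∑ j, P j = 1)
    (c : ℝ) (hc0 : 0 ≤ c) (hc1 : c ≤ 1)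
    (v w : X → ℝ) (hvw : ∀ j, v j ≤ w j) :
    (∑ j, P j * v j) + c * ∑ j, P j * max 0 (v j - ∑ k, P k * v k)
      ≤ (∑ j, P j * w j) + c * ∑ j, P j * max 0 (w j - ∑ k, P k * w k) := by
  have key : ∀ u : X → ℝ,
      (∑ j, P j * u j) + c * ∑ j, P j * max 0 (u j - ∑ k, P k * u k)
        = (1 - c) * (∑ j, P j * u j)
          + c * ∑ j, P j * max (u j) (∑ k, P k * u k) := by
    intro u
    have h1 : ∀ j, max 0 (u j - ∑ k, P k * u k)
        = max (u j) (∑ k, P k * u k) - ∑ k, P k * u k := by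
      intro j
      rcases le_total (u j) (∑ k, P k * u k) with h | h
      · rw [max_eq_right h, max_eq_left (by linarith), sub_self]
      · rw [max_eq_left h, max_eq_right (by linarith)]
    have h2 : ∑ j, P j * max 0 (u j - ∑ k, P k * u k)
        = (∑ j, P j * max (u j) (∑ k, P k * u k)) - ∑ k, P k * u k := by
      simp only [h1, mul_sub]
      rw [Finset.sum_sub_distrib, ← Finset.sum_mul, hP1, one_mul]
    rw [h2]; ring
  rw [key v, key w]
  have hm : (∑ j, P j * v j) ≤ ∑ j, P j * w j :=
    Finset.sum_le_sum fun j _ => mul_le_mul_of_nonneg_left (hvw j) (hP0 j)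
  have hmax : (∑ j, P j * max (v j) (∑ k, P k * v k))
      ≤ ∑ j, P j * max (w j) (∑ k, P k * w k) :=
    Finset.sum_le_sum fun j _ =>
      mul_le_mul_of_nonneg_left (max_le_max (hvw j) hm) (hP0 j)
  have h1c : (0:ℝ) ≤ 1 - c := by linarith
  nlinarith [mul_le_mul_of_nonneg_left hm h1c, mul_le_mul_of_nonneg_left hmax hc0]
end

section
/- Let X be a finite set, P a probability distribution on X, v : X → ℝ, and N ≥ 1. Define σ^(N)(P, v) = E_{j^{1:N} iid ∼ P}[ max_m v(j^m) ]. Then E_P[v] ≤ σ^(N)(P, v) ≤ σ^(N+1)(P, v) ≤ max{v(j) : P_j > 0}, i.e., the mini-batch worst-case mappings are monotone nondecreasing in the batch size N, interpolating between the mean and the worst case. -/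
noncomputable def sigmaN {X : Type*} [Fintype X] (N : ℕ) (P : X → ℝ) (v : X → ℝ) : ℝ :=
  ∑ f : Fin (N + 1) → X, (∏ m, P (f m)) *
    (Finset.univ.sup' ⟨0, Finset.mem_univ 0⟩ fun m => v (f m))

lemma sum_prod_weights {X : Type*} [Fintype X] (P : X → ℝ) (hP1 : ∑ j, P j = 1) (n : ℕ) :
    ∑ f : Fin n → X, ∏ m, P (f m) = 1 := by
  have h : ∑ f : Fin n → X, ∏ m, P (f m) = (∑ j, P j) ^ n := by
    rw [← Fin.prod_const n (∑ j, P j), Finset.prod_univ_sum]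
    simp
  rw [h, hP1, one_pow]

theorem stmt_9 {X : Type*} [Fintype X] (N : ℕ) (P : X → ℝ)
    (hP0 : ∀ j, 0 ≤ P j) (hP1 : ∑ j, P j = 1)
    (v : X → ℝ)
    (hne : (Finset.univ.filter fun j => 0 < P j).Nonempty) :
    (∑ j, P j * v j) ≤ sigmaN N P v ∧
    sigmaN N P v ≤ sigmaN (N + 1) P v ∧
    sigmaN (N + 1) P v ≤ (Finset.univ.filter fun j => 0 < P j).sup' hne v := by
  have hw : ∀ {n : ℕ} (f : Fin n → X), 0 ≤ ∏ m, P (f m) := fun f =>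
    Finset.prod_nonneg fun m _ => hP0 _
  refine ⟨?_, ?_, ?_⟩
  · -- mean ≤ sigmaN N
    have h1 : ∑ f : Fin (N+1) → X, (∏ m, P (f m)) * v (f 0) = ∑ j, P j * v j := by
      rw [(Equiv.sum_comp (Fin.consEquiv fun _ => X)
          (fun f => (∏ m, P (f m)) * v (f 0))).symm]
      rw [Fintype.sum_prod_type]
      have : ∀ x : X, ∑ g : Fin N → X,
          (∏ m : Fin (N+1), P ((Fin.cons x g : Fin (N+1) → X) m)) * v ((Fin.cons x g : Fin (N+1) → X) 0)
          = P x * v x := by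
        intro x
        have : ∀ g : Fin N → X,
            (∏ m : Fin (N+1), P ((Fin.cons x g : Fin (N+1) → X) m)) * v ((Fin.cons x g : Fin (N+1) → X) 0)
            = (P x * v x) * ∏ m, P (g m) := by
          intro g
          rw [Fin.prod_univ_succ]
          simp [Fin.cons_zero, Fin.cons_succ]
          ring
        rw [Finset.sum_congr rfl fun g _ => this g, ← Finset.mul_sum,
          sum_prod_weights P hP1, mul_one]
      simp only [Fin.consEquiv_apply]
      rw [Finset.sum_congr rfl fun x _ => this x]
    rw [← h1]
    apply Finset.sum_le_sum
    intro f _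
    exact mul_le_mul_of_nonneg_left
      (Finset.le_sup' (fun m => v (f m)) (Finset.mem_univ 0)) (hw f)
  · -- sigmaN N ≤ sigmaN (N+1)
    have h2 : sigmaN N P v = ∑ p : X × (Fin (N+1) → X),
        (∏ m : Fin (N+2), P ((Fin.cons p.1 p.2 : Fin (N+2) → X) m)) *
        (Finset.univ.sup' ⟨0, Finset.mem_univ 0⟩ fun m : Fin (N+1) => v (p.2 m)) := by
      rw [Fintype.sum_prod_type]
      unfold sigmaN
      rw [Finset.sum_comm]
      apply Finset.sum_congr rfl
      intro f _
      have : ∀ x : X, (∏ m : Fin (N+2), P ((Fin.cons x f : Fin (N+2) → X) m)) *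
          (Finset.univ.sup' ⟨0, Finset.mem_univ 0⟩ fun m : Fin (N+1) => v (f m))
          = P x * ((∏ m, P (f m)) *
            (Finset.univ.sup' ⟨0, Finset.mem_univ 0⟩ fun m : Fin (N+1) => v (f m))) := by
        intro x
        rw [Fin.prod_univ_succ]
        simp [Fin.cons_zero, Fin.cons_succ]
        ring
      rw [Finset.sum_congr rfl fun x _ => this x, ← Finset.sum_mul, hP1, one_mul]
    rw [h2]
    unfold sigmaN
    rw [(Equiv.sum_comp (Fin.consEquiv fun _ => X)
        (fun f : Fin (N+2) → X => (∏ m, P (f m)) *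
          (Finset.univ.sup' ⟨0, Finset.mem_univ 0⟩ fun m => v (f m)))).symm]
    apply Finset.sum_le_sum
    rintro ⟨x, f⟩ _
    simp only [Fin.consEquiv_apply]
    apply mul_le_mul_of_nonneg_left _ (hw _)
    apply Finset.sup'_le
    intro m _
    have : v (f m) = v ((Fin.cons x f : Fin (N+2) → X) m.succ) := by rw [Fin.cons_succ]
    rw [this]
    exact Finset.le_sup' (fun m => v ((Fin.cons x f : Fin (N+2) → X) m)) (Finset.mem_univ m.succ)
  · -- sigmaN (N+1) ≤ max over support
    set M := (Finset.univ.filter fun j => 0 < P j).sup' hne v with hM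
    unfold sigmaN
    calc ∑ f : Fin (N+2) → X, (∏ m, P (f m)) *
          (Finset.univ.sup' ⟨0, Finset.mem_univ 0⟩ fun m => v (f m))
        ≤ ∑ f : Fin (N+2) → X, (∏ m, P (f m)) * M := by
          apply Finset.sum_le_sum
          intro f _
          rcases eq_or_lt_of_le (hw f) with h | h
          · rw [← h, zero_mul, zero_mul]
          · apply mul_le_mul_of_nonneg_left _ (hw f)
            apply Finset.sup'_le
            intro m _
            apply Finset.le_sup'
            simp only [Finset.mem_filter, Finset.mem_univ, true_and]
            by_contra hc
            push_neg at hc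
            have : P (f m) = 0 := le_antisymm hc (hP0 _)
            exact absurd (Finset.prod_eq_zero (Finset.mem_univ m) this) (ne_of_gt h)
      _ = M := by rw [← Finset.sum_mul, sum_prod_weights P hP1, one_mul]
end

section
/- Let X be a finite set and σ : 𝒫(X) × ℝ^X → ℝ a law-invariant mapping, i.e., σ(P,v) = σ(Q,w) whenever P{v ≤ η} = Q{w ≤ η} for all η ∈ ℝ. Then the mini-batch mapping σ^(N)(P, v) = E_{j^{1:N} iid ∼ P}[ σ( (1/N) Σ_m δ_{j^m}, v ) ] is also law invariant: if (P, v) and (Q, w) induce the same distribution function, then σ^(N)(P, v) = σ^(N)(Q, w). -/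
noncomputable def emp {X : Type*} [Fintype X] [DecidableEq X] (N : ℕ)
    (f : Fin N → X) : X → ℝ :=
  fun j => (∑ m, if f m = j then (1 : ℝ) else 0) / N

theorem stmt_12 {X : Type*} [Fintype X] [DecidableEq X] (N : ℕ)
    (σ : (X → ℝ) → (X → ℝ) → ℝ)
    (hσ : ∀ (P Q : X → ℝ) (v w : X → ℝ),
      (∀ η : ℝ, (∑ j, if v j ≤ η then P j else 0) = (∑ j, if w j ≤ η then Q j else 0)) →
      σ P v = σ Q w)
    (P Q : X → ℝ) (hP0 : ∀ j, 0 ≤ P j) (hP1 : ∑ j, P j = 1)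
    (hQ0 : ∀ j, 0 ≤ Q j) (hQ1 : ∑ j, Q j = 1)
    (v w : X → ℝ)
    (h : ∀ η : ℝ, (∑ j, if v j ≤ η then P j else 0) = (∑ j, if w j ≤ η then Q j else 0)) :
    (∑ f : Fin N → X, (∏ m, P (f m)) * σ (emp N f) v)
      = ∑ g : Fin N → X, (∏ m, Q (g m)) * σ (emp N g) w := by
  classical
  -- point-mass functions
  set μ : ℝ → ℝ := fun t => ∑ j, if v j = t then P j else 0 with hμdef
  set ν : ℝ → ℝ := fun t => ∑ j, if w j = t then Q j else 0 with hνdef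
  -- equality of point masses
  have hmass : ∀ t, μ t = ν t := by
    intro t
    have hsplit : ∀ (R : X → ℝ) (x : X → ℝ),
        (∑ j, if x j ≤ t then R j else 0)
          = (∑ j, if x j = t then R j else 0) + (∑ j, if x j < t then R j else 0) := by
      intro R x
      rw [← Finset.sum_add_distrib]
      refine Finset.sum_congr rfl fun j _ => ?_
      rcases lt_trichotomy (x j) t with h1 | h1 | h1
      · simp [ne_of_lt h1, h1, le_of_lt h1]
      · simp [h1]
      · simp [not_le.mpr h1, not_lt.mpr (le_of_lt h1), ne_of_gt h1]
    have hlt : (∑ j, if v j < t then P j else 0) = (∑ j, if w j < t then Q j else 0) := by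
      set A := (Finset.univ.image v ∪ Finset.univ.image w).filter (fun s => s < t) with hA
      by_cases hne : A.Nonempty
      · set η := A.max' hne with hη
        have hηt : η < t := (Finset.mem_filter.mp (A.max'_mem hne)).2
        have hv : ∀ j, v j < t ↔ v j ≤ η := by
          intro j
          constructor
          · intro hj
            exact A.le_max' _ (Finset.mem_filter.mpr
              ⟨Finset.mem_union_left _ (Finset.mem_image_of_mem v (Finset.mem_univ j)), hj⟩)
          · intro hj; exact lt_of_le_of_lt hj hηt
        have hw : ∀ j, w j < t ↔ w j ≤ η := by
          intro j
          constructor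
          · intro hj
            exact A.le_max' _ (Finset.mem_filter.mpr
              ⟨Finset.mem_union_right _ (Finset.mem_image_of_mem w (Finset.mem_univ j)), hj⟩)
          · intro hj; exact lt_of_le_of_lt hj hηt
        have := h η
        calc (∑ j, if v j < t then P j else 0)
            = ∑ j, if v j ≤ η then P j else 0 := by
              refine Finset.sum_congr rfl fun j _ => ?_; simp only [hv j]
          _ = ∑ j, if w j ≤ η then Q j else 0 := this
          _ = ∑ j, if w j < t then Q j else 0 := by
              refine Finset.sum_congr rfl fun j _ => ?_; simp only [hw j]
      · have hv : ∀ j, ¬ v j < t := by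
          intro j hj
          exact hne ⟨v j, Finset.mem_filter.mpr
            ⟨Finset.mem_union_left _ (Finset.mem_image_of_mem v (Finset.mem_univ j)), hj⟩⟩
        have hw : ∀ j, ¬ w j < t := by
          intro j hj
          exact hne ⟨w j, Finset.mem_filter.mpr
            ⟨Finset.mem_union_right _ (Finset.mem_image_of_mem w (Finset.mem_univ j)), hj⟩⟩
        simp [hv, hw]
    have h1 := h t
    rw [hsplit P v, hsplit Q w] at h1
    simp only [hμdef, hνdef]
    linarith
  -- cdf of the empirical measure
  have hcdf : ∀ (x : X → ℝ) (f : Fin N → X) (η : ℝ),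
      (∑ j, if x j ≤ η then emp N f j else 0)
        = (∑ m, if x (f m) ≤ η then (1 : ℝ) else 0) / N := by
    intro x f η
    unfold emp
    have hd : ∀ j : X, (if x j ≤ η then (∑ m, if f m = j then (1:ℝ) else 0) / N else 0)
        = (if x j ≤ η then (∑ m, if f m = j then (1:ℝ) else 0) else 0) / N := by
      intro j; split <;> simp
    rw [Finset.sum_congr rfl fun j _ => hd j, ← Finset.sum_div]
    congr 1
    have : ∀ j : X, (if x j ≤ η then (∑ m, if f m = j then (1:ℝ) else 0) else 0)
        = ∑ m, if f m = j then (if x j ≤ η then (1:ℝ) else 0) else 0 := by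
      intro j
      split
      · rfl
      · simp
    rw [Finset.sum_congr rfl fun j _ => this j, Finset.sum_comm]
    refine Finset.sum_congr rfl fun m _ => ?_
    rw [Finset.sum_ite_eq Finset.univ (f m) (fun j => if x j ≤ η then (1:ℝ) else 0)]
    simp
  -- σ depends only on the value vector
  have hσkey : ∀ (u : Fin N → ℝ) (f g : Fin N → X),
      (∀ m, v (f m) = u m) → (∀ m, w (g m) = u m) →
      σ (emp N f) v = σ (emp N g) w := by
    intro u f g hf hg
    apply hσ
    intro η
    rw [hcdf v f η, hcdf w g η]
    congr 1
    refine Finset.sum_congr rfl fun m _ => ?_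
    rw [hf m, hg m]
  -- fiber weights
  have hweight : ∀ (R : X → ℝ) (x : X → ℝ) (u : Fin N → ℝ),
      (∑ f ∈ Finset.univ.filter (fun f : Fin N → X => (fun m => x (f m)) = u),
        ∏ m, R (f m)) = ∏ m, ∑ j, if x j = u m then R j else 0 := by
    intro R x u
    rw [Finset.prod_univ_sum]
    rw [Finset.sum_filter]
    rw [Fintype.piFinset_univ]
    refine Finset.sum_congr rfl fun f _ => ?_
    by_cases hf : (fun m => x (f m)) = u
    · have hf' : ∀ m, x (f m) = u m := fun m => congrFun hf m
      rw [if_pos hf]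
      refine (Finset.prod_congr rfl fun m _ => ?_).symm
      rw [if_pos (hf' m)]
    · rw [if_neg hf]
      obtain ⟨m, hm⟩ : ∃ m, x (f m) ≠ u m := by
        by_contra hc
        push_neg at hc
        exact hf (funext hc)
      exact (Finset.prod_eq_zero (Finset.mem_univ m) (by rw [if_neg hm])).symm
  -- group by value vectors
  set U : Finset (Fin N → ℝ) :=
    (Finset.univ.image (fun f : Fin N → X => fun m => v (f m))) ∪
    (Finset.univ.image (fun g : Fin N → X => fun m => w (g m))) with hU
  have hLv : (∑ f : Fin N → X, (∏ m, P (f m)) * σ (emp N f) v)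
      = ∑ u ∈ U, ∑ f ∈ Finset.univ.filter (fun f : Fin N → X => (fun m => v (f m)) = u),
          (∏ m, P (f m)) * σ (emp N f) v := by
    refine (Finset.sum_fiberwise_of_maps_to (fun f _ => ?_) _).symm
    exact Finset.mem_union_left _ (Finset.mem_image_of_mem _ (Finset.mem_univ f))
  have hLw : (∑ g : Fin N → X, (∏ m, Q (g m)) * σ (emp N g) w)
      = ∑ u ∈ U, ∑ g ∈ Finset.univ.filter (fun g : Fin N → X => (fun m => w (g m)) = u),
          (∏ m, Q (g m)) * σ (emp N g) w := by
    refine (Finset.sum_fiberwise_of_maps_to (fun g _ => ?_) _).symm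
    exact Finset.mem_union_right _ (Finset.mem_image_of_mem _ (Finset.mem_univ g))
  rw [hLv, hLw]
  refine Finset.sum_congr rfl fun u _ => ?_
  by_cases hz : (∏ m, μ (u m)) = 0
  · -- both fiber sums vanish
    have hz' : (∏ m, ν (u m)) = 0 := by
      rw [← Finset.prod_congr rfl fun m _ => hmass (u m)]
      exact hz
    have key : ∀ (R : X → ℝ) (x : X → ℝ), (∀ j, 0 ≤ R j) →
        (∏ m, ∑ j, if x j = u m then R j else 0) = 0 →
        ∀ f ∈ Finset.univ.filter (fun f : Fin N → X => (fun m => x (f m)) = u),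
          (∏ m, R (f m)) = 0 := by
      intro R x hR0 hzz f hf
      have hsum := hweight R x u
      rw [hzz] at hsum
      have hnn : ∀ f' ∈ Finset.univ.filter (fun f : Fin N → X => (fun m => x (f m)) = u),
          0 ≤ ∏ m, R (f' m) := fun f' _ => Finset.prod_nonneg fun m _ => hR0 _
      exact (Finset.sum_eq_zero_iff_of_nonneg hnn).mp hsum f hf
    have hv0 := key P v hP0 (by simpa [hμdef] using hz)
    have hw0 := key Q w hQ0 (by simpa [hνdef] using hz')
    rw [Finset.sum_eq_zero fun f hf => by rw [hv0 f hf, zero_mul],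
        Finset.sum_eq_zero fun g hg => by rw [hw0 g hg, zero_mul]]
  · -- all the point masses are positive; both fibers meet the support
    have hzν : (∏ m, ν (u m)) ≠ 0 := by
      rw [← Finset.prod_congr rfl fun m _ => hmass (u m)]
      exact hz
    have hfex : ∀ m, ∃ j, v j = u m := by
      intro m
      by_contra hc
      push_neg at hc
      have : μ (u m) = 0 := by
        simp only [hμdef]
        exact Finset.sum_eq_zero fun j _ => if_neg (hc j)
      exact (Finset.prod_eq_zero (Finset.mem_univ m) this) |> hz
    have hgex : ∀ m, ∃ j, w j = u m := by
      intro m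
      by_contra hc
      push_neg at hc
      have : ν (u m) = 0 := by
        simp only [hνdef]
        exact Finset.sum_eq_zero fun j _ => if_neg (hc j)
      exact (Finset.prod_eq_zero (Finset.mem_univ m) this) |> hzν
    choose f₀ hf₀ using hfex
    choose g₀ hg₀ using hgex
    set C := σ (emp N g₀) w with hC
    have hconstV : ∀ f ∈ Finset.univ.filter (fun f : Fin N → X => (fun m => v (f m)) = u),
        σ (emp N f) v = C := by
      intro f hf
      have hf' : ∀ m, v (f m) = u m := fun m => congrFun (Finset.mem_filter.mp hf).2 m
      exact hσkey u f g₀ hf' hg₀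
    have hconstW : ∀ g ∈ Finset.univ.filter (fun g : Fin N → X => (fun m => w (g m)) = u),
        σ (emp N g) w = C := by
      intro g hg
      have hg' : ∀ m, w (g m) = u m := fun m => congrFun (Finset.mem_filter.mp hg).2 m
      exact (hσkey u f₀ g hf₀ hg').symm.trans (hσkey u f₀ g₀ hf₀ hg₀)
    calc (∑ f ∈ Finset.univ.filter (fun f : Fin N → X => (fun m => v (f m)) = u),
          (∏ m, P (f m)) * σ (emp N f) v)
        = (∑ f ∈ Finset.univ.filter (fun f : Fin N → X => (fun m => v (f m)) = u),
          (∏ m, P (f m))) * C := by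
          rw [Finset.sum_mul]
          exact Finset.sum_congr rfl fun f hf => by rw [hconstV f hf]
      _ = (∏ m, μ (u m)) * C := by rw [hweight P v u]
      _ = (∏ m, ν (u m)) * C := by
          rw [Finset.prod_congr rfl fun m _ => hmass (u m)]
      _ = (∑ g ∈ Finset.univ.filter (fun g : Fin N → X => (fun m => w (g m)) = u),
          (∏ m, Q (g m))) * C := by rw [hweight Q w u]
      _ = ∑ g ∈ Finset.univ.filter (fun g : Fin N → X => (fun m => w (g m)) = u),
          (∏ m, Q (g m)) * σ (emp N g) w := by
          rw [Finset.sum_mul]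
          exact Finset.sum_congr rfl fun g hg => by rw [hconstW g hg]
end
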